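/- Let G be a (claw, co-claw)-free graph. If G contains an induced net, then G is itself isomorphic to the net. -/

import Mathlib

open SimpleGraph

/-- `H` occurs as an induced subgraph of `G`. -/
def HasInducedCopy {V W : Type*} (G : SimpleGraph V) (H : SimpleGraph W) : Prop :=
  ∃ f : W ↪ V, ∀ a b, H.Adj a b ↔ G.Adj (f a) (f b)

/-- The graph on `Fin n` with the given edge list. -/
def listGraph (n : ℕ) (l : List (Fin n × Fin n)) : SimpleGraph (Fin n) :=
  SimpleGraph.fromRel (fun a b => (a, b) ∈ l)

/-- The claw `K_{1,3}`. -/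
def clawGraph : SimpleGraph (Fin 4) := listGraph 4 [(0,1),(0,2),(0,3)]

/-- The co-claw: the complement of the claw (a triangle plus an isolated vertex). -/
def coclawGraph : SimpleGraph (Fin 4) := clawGraphᶜ

/-- The net: a triangle `0,1,2` with pendant vertices `3,4,5`, where `3+i` is
adjacent exactly to `i`. -/
def netGraph : SimpleGraph (Fin 6) := listGraph 6 [(0,1),(0,2),(1,2),(0,3),(1,4),(2,5)]

/-- The 3-sun: the complement of the net. -/
def sunGraph : SimpleGraph (Fin 6) := netGraphᶜ

/-- The bull: a triangle `0,1,2` with pendant vertices `3` (adjacent to `0`)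
and `4` (adjacent to `1`). -/
def bullGraph : SimpleGraph (Fin 5) := listGraph 5 [(0,1),(0,2),(1,2),(0,3),(1,4)]

/-- `{a, b, c}` is an asteroidal triple of `G`: an independent set of three
vertices such that any two of them are joined by a path avoiding the closed
neighbourhood of the third. -/
def IsAT {V : Type*} (G : SimpleGraph V) (a b c : V) : Prop :=
  a ≠ b ∧ a ≠ c ∧ b ≠ c ∧ ¬G.Adj a b ∧ ¬G.Adj a c ∧ ¬G.Adj b c ∧
  (∃ p : G.Walk a b, ∀ x ∈ p.support, x ≠ c ∧ ¬G.Adj c x) ∧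
  (∃ p : G.Walk a c, ∀ x ∈ p.support, x ≠ b ∧ ¬G.Adj b x) ∧
  (∃ p : G.Walk b c, ∀ x ∈ p.support, x ≠ a ∧ ¬G.Adj a x)

/-- A graph is AT-free if it contains no asteroidal triple. -/
def ATFree {V : Type*} (G : SimpleGraph V) : Prop := ∀ a b c : V, ¬ IsAT G a b c

/-- A unit interval graph: vertices are unit intervals `[f v, f v + 1]` on the
real line, and distinct vertices are adjacent iff their intervals intersect. -/
def IsUnitIntervalGraph {V : Type*} (G : SimpleGraph V) : Prop :=
  ∃ f : V → ℝ, ∀ u v : V, G.Adj u v ↔ u ≠ v ∧ |f u - f v| ≤ 1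

/-- A (claw, co-claw)-free graph containing an induced net is itself
isomorphic to the net. -/
lemma mkClaw {V : Type*} {G : SimpleGraph V} {a b c d : V}
    (hbc : b ≠ c) (hbd : b ≠ d) (hcd : c ≠ d)
    (hab : G.Adj a b) (hac : G.Adj a c) (had : G.Adj a d)
    (nbc : ¬G.Adj b c) (nbd : ¬G.Adj b d) (ncd : ¬G.Adj c d) :
    HasInducedCopy G clawGraph := by
  have hA : a ≠ b := hab.ne
  have hB : a ≠ c := hac.ne
  have hC : a ≠ d := had.ne
  refine ⟨⟨![a,b,c,d], ?_⟩, ?_⟩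
  · intro i j h
    fin_cases i <;> fin_cases j <;> simp_all
  · intro i j
    show clawGraph.Adj i j ↔ G.Adj (![a,b,c,d] i) (![a,b,c,d] j)
    fin_cases i <;> fin_cases j <;>
      simp_all [clawGraph, listGraph, fromRel_adj, G.adj_comm] <;> decide

lemma mkCoclaw {V : Type*} {G : SimpleGraph V} {a b c d : V}
    (hda : d ≠ a) (hdb : d ≠ b) (hdc : d ≠ c)
    (hab : G.Adj a b) (hac : G.Adj a c) (hbc : G.Adj b c)
    (nda : ¬G.Adj d a) (ndb : ¬G.Adj d b) (ndc : ¬G.Adj d c) :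
    HasInducedCopy G coclawGraph := by
  have hA : a ≠ b := hab.ne
  have hB : a ≠ c := hac.ne
  have hC : b ≠ c := hbc.ne
  refine ⟨⟨![d,a,b,c], ?_⟩, ?_⟩
  · intro i j h
    fin_cases i <;> fin_cases j <;> simp_all
  · intro i j
    show coclawGraph.Adj i j ↔ G.Adj (![d,a,b,c] i) (![d,a,b,c] j)
    fin_cases i <;> fin_cases j <;>
      simp_all [coclawGraph, clawGraph, listGraph, compl_adj, fromRel_adj,
        G.adj_comm] <;> decide

/-- Key claim: if `v` is a seventh vertex outside an induced net, it is
adjacent to every pendant vertex of the net. -/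
lemma claimA {V : Type*} {G : SimpleGraph V}
    (hclaw : ¬ HasInducedCopy G clawGraph) (hcoclaw : ¬ HasInducedCopy G coclawGraph)
    {ci cj ck si sj sk v : V}
    (eij : G.Adj ci cj) (eik : G.Adj ci ck) (ejk : G.Adj cj ck)
    (ei : G.Adj ci si) (ej : G.Adj cj sj) (ek : G.Adj ck sk)
    (nsicj : ¬G.Adj si cj) (nsjci : ¬G.Adj sj ci)
    (nski : ¬G.Adj sk ci) (nskj : ¬G.Adj sk cj)
    (nsksi : ¬G.Adj sk si) (nsksj : ¬G.Adj sk sj)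
    (neski : sk ≠ ci) (neskj : sk ≠ cj) (nesksi : sk ≠ si) (nesksj : sk ≠ sj)
    (nesicj : si ≠ cj) (nesjci : sj ≠ ci)
    (nvci : v ≠ ci) (nvcj : v ≠ cj) (nvck : v ≠ ck)
    (nvsi : v ≠ si) (nvsj : v ≠ sj) (nvsk : v ≠ sk)
    (hnsk : ¬ G.Adj v sk) : False := by
  by_cases hvi : G.Adj v ci
  · by_cases hvj : G.Adj v cj
    · -- coclaw: triangle v ci cj, isolated sk
      exact hcoclaw (mkCoclaw nvsk.symm neski neskj hvi hvj eij
        (fun h => hnsk h.symm) nski nskj)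
    · by_cases hvk : G.Adj v ck
      · -- claw at ck: leaves v, sk, cj
        exact hclaw (mkClaw nvsk nvcj neskj hvk.symm ek ejk.symm
          hnsk hvj nskj)
      · by_cases hvsi : G.Adj v si
        · -- coclaw: triangle ci si v, isolated sk
          exact hcoclaw (mkCoclaw neski nesksi nvsk.symm ei hvi.symm hvsi.symm
            nski nsksi (fun h => hnsk h.symm))
        · -- claw at ci: leaves v, si, cj
          exact hclaw (mkClaw nvsi nvcj nesicj hvi.symm ei eij
            hvsi hvj nsicj)
  · by_cases hvj : G.Adj v cj
    · by_cases hvk : G.Adj v ck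
      · -- claw at ck: leaves v, sk, ci
        exact hclaw (mkClaw nvsk nvci neski hvk.symm ek eik.symm
          hnsk hvi nski)
      · by_cases hvsj : G.Adj v sj
        · -- coclaw: triangle cj sj v, isolated sk
          exact hcoclaw (mkCoclaw neskj nesksj nvsk.symm ej hvj.symm hvsj.symm
            nskj nsksj (fun h => hnsk h.symm))
        · -- claw at cj: leaves v, sj, ci
          exact hclaw (mkClaw nvsj nvci nesjci hvj.symm ej eij.symm
            hvsj hvi nsjci)
    · by_cases hvk : G.Adj v ck
      · -- claw at ck: leaves v, sk, ci
        exact hclaw (mkClaw nvsk nvci neski hvk.symm ek eik.symm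
          hnsk hvi nski)
      · -- coclaw: triangle ci cj ck, isolated v
        exact hcoclaw (mkCoclaw nvci nvcj nvck eij eik ejk hvi hvj hvk)

instance : DecidableRel netGraph.Adj := fun a b =>
  decidable_of_iff _ (SimpleGraph.fromRel_adj (fun a b =>
    (a, b) ∈ [((0:Fin 6),(1:Fin 6)),(0,2),(1,2),(0,3),(1,4),(2,5)]) a b).symm

theorem claw_coclaw_net_is_net {V : Type*} (G : SimpleGraph V)
    (hclaw : ¬ HasInducedCopy G clawGraph)
    (hcoclaw : ¬ HasInducedCopy G coclawGraph)
    (hnet : HasInducedCopy G netGraph) :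
    Nonempty (G ≃g netGraph) := by
  obtain ⟨f, hf⟩ := hnet
  have adj : ∀ i j : Fin 6, netGraph.Adj i j → G.Adj (f i) (f j) :=
    fun i j h => (hf i j).1 h
  have nadj : ∀ i j : Fin 6, ¬ netGraph.Adj i j → ¬ G.Adj (f i) (f j) :=
    fun i j h hG => h ((hf i j).2 hG)
  have ne : ∀ i j : Fin 6, i ≠ j → f i ≠ f j := fun i j h => f.injective.ne h
  have A01 := adj 0 1 (by decide); have A02 := adj 0 2 (by decide)
  have A12 := adj 1 2 (by decide); have A03 := adj 0 3 (by decide)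
  have A14 := adj 1 4 (by decide); have A25 := adj 2 5 (by decide)
  have N04 := nadj 0 4 (by decide); have N05 := nadj 0 5 (by decide)
  have N13 := nadj 1 3 (by decide); have N15 := nadj 1 5 (by decide)
  have N23 := nadj 2 3 (by decide); have N24 := nadj 2 4 (by decide)
  have N34 := nadj 3 4 (by decide); have N35 := nadj 3 5 (by decide)
  have N45 := nadj 4 5 (by decide)
  have hsurj : Function.Surjective f := by
    intro v
    by_contra hv
    push_neg at hv
    -- v is adjacent to all three pendant vertices
    have hs5 : G.Adj v (f 5) := by
      by_contra h
      exact claimA hclaw hcoclaw A01 A02 A12 A03 A14 A25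
        (fun h' => N13 h'.symm) (fun h' => N04 h'.symm)
        (fun h' => N05 h'.symm) (fun h' => N15 h'.symm)
        (fun h' => N35 h'.symm) (fun h' => N45 h'.symm)
        (ne 5 0 (by decide)) (ne 5 1 (by decide)) (ne 5 3 (by decide))
        (ne 5 4 (by decide)) (ne 3 1 (by decide)) (ne 4 0 (by decide))
        (Ne.symm (hv 0)) (Ne.symm (hv 1)) (Ne.symm (hv 2))
        (Ne.symm (hv 3)) (Ne.symm (hv 4)) (Ne.symm (hv 5)) h
    have hs3 : G.Adj v (f 3) := by
      by_contra h
      exact claimA hclaw hcoclaw A12 (A01.symm) (A02.symm) A14 A25 A03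
        (fun h' => N24 h'.symm) (fun h' => N15 h'.symm)
        (fun h' => N13 h'.symm) (fun h' => N23 h'.symm)
        N34 N35
        (ne 3 1 (by decide)) (ne 3 2 (by decide)) (ne 3 4 (by decide))
        (ne 3 5 (by decide)) (ne 4 2 (by decide)) (ne 5 1 (by decide))
        (Ne.symm (hv 1)) (Ne.symm (hv 2)) (Ne.symm (hv 0))
        (Ne.symm (hv 4)) (Ne.symm (hv 5)) (Ne.symm (hv 3)) h
    have hs4 : G.Adj v (f 4) := by
      by_contra h
      exact claimA hclaw hcoclaw (A02.symm) (A12.symm) A01 A25 A03 A14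
        (fun h' => N05 h'.symm) (fun h' => N23 h'.symm)
        (fun h' => N24 h'.symm) (fun h' => N04 h'.symm)
        N45 (fun h' => N34 h'.symm)
        (ne 4 2 (by decide)) (ne 4 0 (by decide)) (ne 4 5 (by decide))
        (ne 4 3 (by decide)) (ne 5 0 (by decide)) (ne 3 2 (by decide))
        (Ne.symm (hv 2)) (Ne.symm (hv 0)) (Ne.symm (hv 1))
        (Ne.symm (hv 5)) (Ne.symm (hv 3)) (Ne.symm (hv 4)) h
    exact hclaw (mkClaw (ne 3 4 (by decide)) (ne 3 5 (by decide))
      (ne 4 5 (by decide)) hs3 hs4 hs5 N34 N35 N45)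
  let e := Equiv.ofBijective f ⟨f.injective, hsurj⟩
  have he : ∀ x, f (e.symm x) = x := fun x => e.apply_symm_apply x
  refine ⟨⟨e.symm, ?_⟩⟩
  intro a b
  rw [hf, he, he]
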